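/- (Theorem 2, non-ergodic convergence rate) Suppose the tolerance sequence {η_k} is positive, nonincreasing, and summable, and suppose √(η_{k+1}/η_k) ≥ (k−2)/k for all k ≥ k₀, where k₀ ≥ 4 is an integer such that δ_k ≤ 1/(2θ) and η_k ≤ 1/(24θ) for all k ≥ k₀. Then for all k ≥ k₀: δ_k ≤ τ₁/k + τ₂√(η_k), where τ₁ := k₀/(4θ) and τ₂ := 1/(4θ√(η_{k₀})). -/

import Mathlib

open RealInnerProductSpace Filter Topology

lemma convex_grad_ineq {n : ℕ} {f : EuclideanSpace ℝ (Fin n) → ℝ}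
    (hf : ConvexOn ℝ Set.univ f) {x G : EuclideanSpace ℝ (Fin n)}
    (hG : HasGradientAt f G x) (y : EuclideanSpace ℝ (Fin n)) :
    f x + ⟪G, y - x⟫ ≤ f y := by
  have hline : HasDerivAt (fun t : ℝ => x + t • (y - x)) (y - x) 0 := by
    simpa using ((hasDerivAt_id (0:ℝ)).smul_const (y - x)).const_add x
  have hcomp : HasDerivAt (fun t : ℝ => f (x + t • (y - x))) ⟪G, y - x⟫ 0 := by
    have hfd : HasFDerivAt f ((InnerProductSpace.toDual ℝ _) G) (x + (0:ℝ) • (y - x)) := by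
      simpa using hG.hasFDerivAt
    have := hfd.comp_hasDerivAt 0 hline
    simpa [InnerProductSpace.toDual_apply_apply, Function.comp_def] using this
  have hslope : ∀ t : ℝ, t ∈ Set.Ioc (0:ℝ) 1 →
      slope (fun t : ℝ => f (x + t • (y - x))) 0 t ≤ f y - f x := by
    intro t ht
    have hconv := hf.2 (Set.mem_univ x) (Set.mem_univ y)
      (by linarith [ht.1, ht.2] : (0:ℝ) ≤ 1 - t) (le_of_lt ht.1) (by ring)
    have hxt : x + t • (y - x) = (1 - t) • x + t • y := by
      simp [smul_sub, sub_smul]; abel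
    have h1 : f (x + t • (y - x)) ≤ (1 - t) * f x + t * f y := by
      rw [hxt]; simpa using hconv
    simp only [slope_def_field, zero_smul, add_zero]
    rw [div_le_iff₀ (by linarith [ht.1] : (0:ℝ) < t - 0)]
    nlinarith [ht.1]
  have htend : Tendsto (slope (fun t : ℝ => f (x + t • (y - x))) 0) (𝓝[>] (0:ℝ))
      (𝓝 ⟪G, y - x⟫) :=
    (hasDerivAt_iff_tendsto_slope.1 hcomp).mono_left
      (nhdsWithin_mono 0 (fun z hz => ne_of_gt hz))
  have hle : ⟪G, y - x⟫ ≤ f y - f x := by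
    refine le_of_tendsto htend ?_
    filter_upwards [Ioc_mem_nhdsGT_of_mem (by norm_num : (0:ℝ) ∈ Set.Ico (0:ℝ) 1)] with t ht
    exact hslope t ht
  linarith

lemma coreA (K k0 r e r'' : ℝ) (hk0 : 4 ≤ k0) (hK : k0 ≤ K) (hr : 0 ≤ r) (hr1 : r ≤ 1)
    (he : 0 ≤ e) (he6 : 6*e ≤ r^2) (hr'' : r*(K-2)/K ≤ r'') :
    k0/K + r + e - (k0/K + r - e)^2/2 ≤ k0/(K+1) + r'' := by
  have hK0 : (0:ℝ) < K := by linarith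
  have hK1 : (0:ℝ) < K+1 := by linarith
  have her : e ≤ r/6 := by nlinarith
  have h1 : 2*(k0/(K*(K+1))) ≤ (k0/K)^2 := by
    rw [div_pow, ← sub_nonneg]
    have heq : k0^2/K^2 - 2*(k0/(K*(K+1))) = (k0*(k0*(K+1)-2*K))/(K^2*(K+1)) := by
      field_simp
    rw [heq]
    have hk0K : 4*(K+1) ≤ k0*(K+1) := mul_le_mul_of_nonneg_right hk0 (by linarith)
    apply div_nonneg (by nlinarith) (by positivity)
  have h2 : 2*r/K ≤ (k0/K)*(5*r/6) := by
    rw [← sub_nonneg]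
    have heq : (k0/K)*(5*r/6) - 2*r/K = (r*(5*k0-12))/(6*K) := by field_simp; ring
    rw [heq]
    apply div_nonneg (by nlinarith) (by positivity)
  have h3 : 2*e ≤ 25*r^2/36 := by nlinarith
  have hbase : k0/K + 5*r/6 ≤ k0/K + r - e := by linarith
  have hpos : 0 ≤ k0/K + 5*r/6 := by positivity
  have hsq : (k0/K + 5*r/6)^2 ≤ (k0/K + r - e)^2 := by nlinarith
  have hmain : k0/(K*(K+1)) + 2*r/K + e ≤ (k0/K + r - e)^2/2 := by nlinarith
  have hq' : k0/K - k0/(K*(K+1)) = k0/(K+1) := by field_simp; ring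
  have hr2 : r - 2*r/K = r*(K-2)/K := by field_simp
  linarith

lemma coreB (K k0 r e r'' : ℝ) (hk0 : 4 ≤ k0) (hK : k0 ≤ K) (hr : 0 ≤ r) (hr1 : r ≤ 1)
    (he : 0 ≤ e) (he6 : 6*e ≤ r^2) (he1 : e ≤ 1/6) (hcond : 1 + e ≤ k0/K + r)
    (hr'' : r*(K-2)/K ≤ r'') :
    2*e + 1/2 ≤ k0/(K+1) + r'' := by
  have hK0 : (0:ℝ) < K := by linarith
  have hK1 : (0:ℝ) < K+1 := by linarith
  have hrlo : K - k0 ≤ r*K := by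
    have h' : (1 - k0/K)*K ≤ r*K :=
      mul_le_mul_of_nonneg_right (by linarith) hK0.le
    have heq : (1 - k0/K)*K = K - k0 := by field_simp
    linarith
  have hP0 : (0:ℝ) ≤ 5*K^2 - 7*K - 12 := by nlinarith
  have hs1 : (K^2+K)*r^2 ≤ (K^2+K)*r :=
    mul_le_mul_of_nonneg_left (by nlinarith) (by positivity)
  have hs2 : (K-k0)*(5*K^2-7*K-12) ≤ (r*K)*(5*K^2-7*K-12) :=
    mul_le_mul_of_nonneg_right hrlo hP0
  have hs3 : (0:ℝ) ≤ K^3 - 7*K^2 + 16*K + 48 := by nlinarith [sq_nonneg (K-4), hK0.le]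
  have hs4 : 4*(K^2+7*K+12) ≤ k0*(K^2+7*K+12) :=
    mul_le_mul_of_nonneg_right hk0 (by positivity)
  have hKQ : 0 ≤ K*(6*k0*K + 6*(r*((K-2)*(K+1))) - r^2*(K*(K+1)) - 4*(K*(K+1))) := by
    nlinarith [mul_le_mul_of_nonneg_left hs1 hK0.le, hs2, hs3, hs4]
  have key : k0/(K+1) + r*(K-2)/K - (r^2/6 + 1/6 + 1/2)
      = (K*(6*k0*K + 6*(r*((K-2)*(K+1))) - r^2*(K*(K+1)) - 4*(K*(K+1))))/(6*K^2*(K+1)) := by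
    field_simp; ring
  have hnn : 0 ≤ k0/(K+1) + r*(K-2)/K - (r^2/6 + 1/6 + 1/2) := by
    rw [key]; positivity
  linarith

lemma stepA (θ s s' s₀ K k0 : ℝ) (hθ : 0 < θ) (hs : 0 < s) (hs0 : s ≤ s₀)
    (hs' : s*(K-2)/K ≤ s') (hs0e : s₀^2 ≤ 1/(24*θ)) (hk0 : 4 ≤ k0) (hK : k0 ≤ K) :
    (k0/(4*θ))/K + (1/(4*θ*s₀))*s + s^2 - 2*θ*((k0/(4*θ))/K + (1/(4*θ*s₀))*s - s^2)^2
      ≤ (k0/(4*θ))/(K+1) + (1/(4*θ*s₀))*s' := by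
  have hs0pos : 0 < s₀ := lt_of_lt_of_le hs hs0
  have hKpos : (0:ℝ) < K := by linarith
  have hK1 : (0:ℝ) < K+1 := by linarith
  have hθ' : θ ≠ 0 := ne_of_gt hθ
  have hs0' : s₀ ≠ 0 := ne_of_gt hs0pos
  have hK' : K ≠ 0 := ne_of_gt hKpos
  have hK1' : (K:ℝ)+1 ≠ 0 := ne_of_gt hK1
  have h24 : θ*s₀^2 ≤ 1/24 := by
    calc θ*s₀^2 ≤ θ*(1/(24*θ)) := mul_le_mul_of_nonneg_left hs0e hθ.le
    _ = 1/24 := by field_simp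
  have hr : (0:ℝ) ≤ s/s₀ := by positivity
  have hr1 : s/s₀ ≤ 1 := by rw [div_le_one hs0pos]; exact hs0
  have he : (0:ℝ) ≤ 4*θ*s^2 := by positivity
  have he6 : 6*(4*θ*s^2) ≤ (s/s₀)^2 := by
    rw [div_pow, le_div_iff₀ (by positivity)]
    nlinarith [mul_le_mul_of_nonneg_left h24 (by positivity : (0:ℝ) ≤ 24*s^2)]
  have hr'' : (s/s₀)*(K-2)/K ≤ s'/s₀ := by
    have heq : (s/s₀)*(K-2)/K = (s*(K-2)/K)/s₀ := by ring
    rw [heq]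
    exact (div_le_div_iff_of_pos_right hs0pos).2 hs'
  have key := coreA K k0 (s/s₀) (4*θ*s^2) (s'/s₀) hk0 hK hr hr1 he he6 hr''
  have e1 : (k0/(4*θ))/K + (1/(4*θ*s₀))*s + s^2 - 2*θ*((k0/(4*θ))/K + (1/(4*θ*s₀))*s - s^2)^2
      = (k0/K + s/s₀ + 4*θ*s^2 - (k0/K + s/s₀ - 4*θ*s^2)^2/2)/(4*θ) := by
    field_simp; ring
  have e2 : (k0/(4*θ))/(K+1) + (1/(4*θ*s₀))*s' = (k0/(K+1) + s'/s₀)/(4*θ) := by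
    field_simp
  rw [e1, e2]
  gcongr

lemma stepB (θ s s' s₀ K k0 : ℝ) (hθ : 0 < θ) (hs : 0 < s) (hs0 : s ≤ s₀)
    (hs' : s*(K-2)/K ≤ s') (hs0e : s₀^2 ≤ 1/(24*θ)) (hse : s^2 ≤ 1/(24*θ))
    (hk0 : 4 ≤ k0) (hK : k0 ≤ K)
    (hcond : 1/(4*θ) + s^2 ≤ (k0/(4*θ))/K + (1/(4*θ*s₀))*s) :
    2*s^2 + 1/(8*θ) ≤ (k0/(4*θ))/(K+1) + (1/(4*θ*s₀))*s' := by
  have hs0pos : 0 < s₀ := lt_of_lt_of_le hs hs0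
  have hKpos : (0:ℝ) < K := by linarith
  have hK1 : (0:ℝ) < K+1 := by linarith
  have hθ' : θ ≠ 0 := ne_of_gt hθ
  have hs0' : s₀ ≠ 0 := ne_of_gt hs0pos
  have hK' : K ≠ 0 := ne_of_gt hKpos
  have hK1' : (K:ℝ)+1 ≠ 0 := ne_of_gt hK1
  have h24 : θ*s₀^2 ≤ 1/24 := by
    calc θ*s₀^2 ≤ θ*(1/(24*θ)) := mul_le_mul_of_nonneg_left hs0e hθ.le
    _ = 1/24 := by field_simp
  have hr : (0:ℝ) ≤ s/s₀ := by positivity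
  have hr1 : s/s₀ ≤ 1 := by rw [div_le_one hs0pos]; exact hs0
  have he : (0:ℝ) ≤ 4*θ*s^2 := by positivity
  have he6 : 6*(4*θ*s^2) ≤ (s/s₀)^2 := by
    rw [div_pow, le_div_iff₀ (by positivity)]
    nlinarith [mul_le_mul_of_nonneg_left h24 (by positivity : (0:ℝ) ≤ 24*s^2)]
  have he1 : 4*θ*s^2 ≤ 1/6 := by
    have h := mul_le_mul_of_nonneg_left hse (by positivity : (0:ℝ) ≤ 4*θ)
    calc 4*θ*s^2 = 4*θ*(s^2) := by ring
    _ ≤ 4*θ*(1/(24*θ)) := h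
    _ = 1/6 := by field_simp; ring
  have hr'' : (s/s₀)*(K-2)/K ≤ s'/s₀ := by
    have heq : (s/s₀)*(K-2)/K = (s*(K-2)/K)/s₀ := by ring
    rw [heq]
    exact (div_le_div_iff_of_pos_right hs0pos).2 hs'
  have hcond' : 1 + 4*θ*s^2 ≤ k0/K + s/s₀ := by
    have e1 : 1/(4*θ) + s^2 = (1 + 4*θ*s^2)/(4*θ) := by field_simp
    have e2 : (k0/(4*θ))/K + (1/(4*θ*s₀))*s = (k0/K + s/s₀)/(4*θ) := by field_simp
    rw [e1, e2] at hcond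
    exact (div_le_div_iff_of_pos_right (by positivity)).1 hcond
  have key := coreB K k0 (s/s₀) (4*θ*s^2) (s'/s₀) hk0 hK hr hr1 he he6 he1 hcond' hr''
  have e3 : 2*s^2 + 1/(8*θ) = (2*(4*θ*s^2) + 1/2)/(4*θ) := by field_simp; ring
  have e4 : (k0/(4*θ))/(K+1) + (1/(4*θ*s₀))*s' = (k0/(K+1) + s'/s₀)/(4*θ) := by
    field_simp
  rw [e3, e4]
  gcongr


lemma tinyA (θ a c s' : ℝ) (hθ : 0 < θ) (ha : 0 ≤ a) (hc : 0 < c)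
    (h16 : 16*θ*(a*c) ≤ 1) (hhalf : a/2 ≤ s') : 2*a^2 ≤ 1/(4*θ*c)*s' := by
  have hq1 : 1/(4*θ*c)*(a/2) - 2*a^2 = (a*(1 - 16*θ*(a*c)))/(8*θ*c) := by
    field_simp; ring
  have hq2 : 0 ≤ 1/(4*θ*c)*(a/2) - 2*a^2 := by
    rw [hq1]
    exact div_nonneg (mul_nonneg ha (by linarith)) (by positivity)
  have hq3 : 1/(4*θ*c)*(a/2) ≤ 1/(4*θ*c)*s' :=
    mul_le_mul_of_nonneg_left hhalf (by positivity)
  linarith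

set_option maxHeartbeats 2000000 in
/-- **Theorem 2 (non-ergodic convergence rate).**
If `{η_k}` is positive, nonincreasing, summable, and `√(η_{k+1}/η_k) ≥ (k−2)/k`
for all `k ≥ k₀`, where `k₀ ≥ 4` satisfies `δ_k ≤ 1/(2θ)` and `η_k ≤ 1/(24θ)` for all
`k ≥ k₀`, then `δ_k ≤ τ₁/k + τ₂ √(η_k)` for all `k ≥ k₀`, where `τ₁ := k₀/(4θ)` and
`τ₂ := 1/(4θ√(η_{k₀}))`. -/
theorem ial_nonergodic_rate
    {n m : ℕ}
    (A : EuclideanSpace ℝ (Fin n) →L[ℝ] EuclideanSpace ℝ (Fin m))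
    (b : EuclideanSpace ℝ (Fin m))
    (f g : EuclideanSpace ℝ (Fin n) → ℝ)
    (f' : EuclideanSpace ℝ (Fin n) → EuclideanSpace ℝ (Fin n))
    (hf : ConvexOn ℝ Set.univ f)
    (hf' : ∀ x, HasGradientAt f (f' x) x)
    (hg : ConvexOn ℝ Set.univ g)
    (β : ℝ) (hβ : 0 < β)
    (L : EuclideanSpace ℝ (Fin n) → EuclideanSpace ℝ (Fin m) → ℝ)
    (hL : ∀ x lam, L x lam
        = f x + ⟪lam, A x - b⟫ + β / 2 * ‖A x - b‖ ^ 2 + g x)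
    (d : EuclideanSpace ℝ (Fin m) → ℝ)
    (hd : ∀ lam, IsLeast (Set.range fun x => L x lam) (d lam))
    (x : ℕ → EuclideanSpace ℝ (Fin n))
    (lam : ℕ → EuclideanSpace ℝ (Fin m))
    (η : ℕ → ℝ)
    (hηpos : ∀ k, 1 ≤ k → 0 < η k)
    (hηmono : ∀ k, 1 ≤ k → η (k + 1) ≤ η k)
    (hsum : Summable fun k : ℕ => η (k + 1))
    (happrox : ∀ k, 1 ≤ k → ∀ y,
        ⟪f' (x (k + 1)) + A.adjoint (lam k + β • (A (x (k + 1)) - b)), x (k + 1) - y⟫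
          + g (x (k + 1)) - g y ≤ η k)
    (hlam : ∀ k, 1 ≤ k → lam (k + 1) = lam k + β • (A (x (k + 1)) - b))
    (lamstar : EuclideanSpace ℝ (Fin m))
    (hstar : ∀ μ, d μ ≤ d lamstar)
    (δ : ℕ → ℝ)
    (hδ : ∀ k, δ k = d lamstar - d (lam k))
    (B : ℝ)
    (hB : B = Real.sqrt (‖lam 1 - lamstar‖ ^ 2 + 2 * β * ∑' k : ℕ, η (k + 1)))
    (θ : ℝ)
    (hθ : θ = β / (4 * B ^ 2))
    (k₀ : ℕ) (hk₀ : 4 ≤ k₀)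
    (hδk₀ : ∀ k, k₀ ≤ k → δ k ≤ 1 / (2 * θ))
    (hηk₀ : ∀ k, k₀ ≤ k → η k ≤ 1 / (24 * θ))
    (hratio : ∀ k, k₀ ≤ k → ((k : ℝ) - 2) / k ≤ Real.sqrt (η (k + 1) / η k))
    (τ₁ τ₂ : ℝ)
    (hτ₁ : τ₁ = k₀ / (4 * θ))
    (hτ₂ : τ₂ = 1 / (4 * θ * Real.sqrt (η k₀))) :
    ∀ k, k₀ ≤ k → δ k ≤ τ₁ / k + τ₂ * Real.sqrt (η k) := by
  -- positivity of B and θ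
  have htnn : ∀ k : ℕ, 0 ≤ η (k+1) := fun k => (hηpos (k+1) (Nat.succ_le_succ (Nat.zero_le k))).le
  have htsum_pos : 0 < ∑' k : ℕ, η (k + 1) :=
    Summable.tsum_pos hsum htnn 0 (hηpos 1 le_rfl)
  have hB2nn : 0 ≤ ‖lam 1 - lamstar‖ ^ 2 + 2 * β * ∑' k : ℕ, η (k + 1) := by positivity
  have hBsq : B^2 = ‖lam 1 - lamstar‖ ^ 2 + 2 * β * ∑' k : ℕ, η (k + 1) := by
    rw [hB, Real.sq_sqrt hB2nn]
  have hB2pos : 0 < B^2 := by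
    rw [hBsq]
    nlinarith [sq_nonneg ‖lam 1 - lamstar‖]
  have hθpos : 0 < θ := by rw [hθ]; exact div_pos hβ (by nlinarith)
  have hβθ : β = 4*θ*B^2 := by
    rw [hθ]; have hB0 : B ≠ 0 := fun h => by rw [h] at hB2pos; norm_num at hB2pos
    field_simp
  have hBpos : 0 < B := by
    rcases lt_trichotomy B 0 with h | h | h
    · exfalso; rw [hB] at h; exact absurd (Real.sqrt_nonneg _) (not_le.2 h)
    · exfalso; rw [h] at hB2pos; norm_num at hB2pos
    · exact h
  -- basic dual facts
  have hdle : ∀ y μ, d μ ≤ L y μ := fun y μ => (hd μ).2 ⟨y, rfl⟩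
  have hdexists : ∀ μ, ∃ z, L z μ = d μ := fun μ => (hd μ).1
  -- shift identity
  have hshift : ∀ (xx : EuclideanSpace ℝ (Fin n)) (μ ν : EuclideanSpace ℝ (Fin m)),
      L xx μ - L xx ν = ⟪μ - ν, A xx - b⟫ := by
    intro xx μ ν
    rw [hL, hL, inner_sub_left]; ring
  -- approximate minimization
  have hL2 : ∀ k, 1 ≤ k → ∀ y, L (x (k+1)) (lam k) ≤ L y (lam k) + η k := by
    intro k hk y
    have hap := happrox k hk y
    have habel : A (x (k+1)) - A y = (A (x (k+1)) - b) - (A y - b) := by abel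
    have hsplit : ⟪f' (x (k+1)) + A.adjoint (lam k + β • (A (x (k+1)) - b)), x (k+1) - y⟫
        = ⟪f' (x (k+1)), x (k+1) - y⟫
          + (⟪lam k, (A (x (k+1)) - b) - (A y - b)⟫
          + β * ⟪A (x (k+1)) - b, (A (x (k+1)) - b) - (A y - b)⟫) := by
      rw [inner_add_left, ContinuousLinearMap.adjoint_inner_left, map_sub, habel,
        inner_add_left, real_inner_smul_left]
    have hfi := convex_grad_ineq hf (hf' (x (k+1))) y
    have hneg : ⟪f' (x (k+1)), y - x (k+1)⟫ = -⟪f' (x (k+1)), x (k+1) - y⟫ := by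
      rw [show y - x (k+1) = -(x (k+1) - y) from by abel, inner_neg_right]
    have h2 : ⟪lam k, (A (x (k+1)) - b) - (A y - b)⟫
        = ⟪lam k, A (x (k+1)) - b⟫ - ⟪lam k, A y - b⟫ := inner_sub_right _ _ _
    have hns := norm_sub_sq_real (A (x (k+1)) - b) ((A (x (k+1)) - b) - (A y - b))
    have h0 : (A (x (k+1)) - b) - ((A (x (k+1)) - b) - (A y - b)) = A y - b := by abel
    rw [h0] at hns
    have h3 : β/2*‖A (x (k+1)) - b‖^2 - β/2*‖A y - b‖^2
        ≤ β * ⟪A (x (k+1)) - b, (A (x (k+1)) - b) - (A y - b)⟫ := by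
      nlinarith [sq_nonneg ‖(A (x (k+1)) - b) - (A y - b)‖, hβ.le,
        mul_nonneg hβ.le (sq_nonneg ‖(A (x (k+1)) - b) - (A y - b)‖)]
    rw [hL (x (k+1)) (lam k), hL y (lam k)]
    linarith [hap, hsplit, hfi, hneg, h2, h3]
  have hLd : ∀ k, 1 ≤ k → L (x (k+1)) (lam k) ≤ d (lam k) + η k := by
    intro k hk
    obtain ⟨z, hz⟩ := hdexists (lam k)
    have := hL2 k hk z
    rw [hz] at this
    exact this
  -- approximate supergradient
  have hsg : ∀ k, 1 ≤ k → ∀ μ, d μ ≤ d (lam k) + ⟪μ - lam k, A (x (k+1)) - b⟫ + η k := by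
    intro k hk μ
    have h1 := hdle (x (k+1)) μ
    have h2 := hshift (x (k+1)) μ (lam k)
    have h3 := hLd k hk
    linarith
  -- lower bound on the next dual value
  have hlow : ∀ k, 1 ≤ k →
      L (x (k+1)) (lam (k+1)) - β/2*‖A (x (k+1)) - b‖^2 - η k ≤ d (lam (k+1)) := by
    intro k hk
    obtain ⟨z, hz⟩ := hdexists (lam (k+1))
    have hap := happrox k hk z
    rw [← hlam k hk] at hap
    have habel : A (x (k+1)) - A z = (A (x (k+1)) - b) - (A z - b) := by abel
    have hsplit : ⟪f' (x (k+1)) + A.adjoint (lam (k+1)), x (k+1) - z⟫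
        = ⟪f' (x (k+1)), x (k+1) - z⟫ + ⟪lam (k+1), (A (x (k+1)) - b) - (A z - b)⟫ := by
      rw [inner_add_left, ContinuousLinearMap.adjoint_inner_left, map_sub, habel]
    have hfi := convex_grad_ineq hf (hf' (x (k+1))) z
    have hneg : ⟪f' (x (k+1)), z - x (k+1)⟫ = -⟪f' (x (k+1)), x (k+1) - z⟫ := by
      rw [show z - x (k+1) = -(x (k+1) - z) from by abel, inner_neg_right]
    have h2 : ⟪lam (k+1), (A (x (k+1)) - b) - (A z - b)⟫
        = ⟪lam (k+1), A (x (k+1)) - b⟫ - ⟪lam (k+1), A z - b⟫ := inner_sub_right _ _ _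
    have hnn : (0:ℝ) ≤ β/2*‖A z - b‖^2 := by positivity
    rw [← hz, hL (x (k+1)) (lam (k+1)), hL z (lam (k+1))]
    linarith [hap, hsplit, hfi, hneg, h2]
  -- ascent property
  have hasc : ∀ k, 1 ≤ k →
      d (lam k) + β/2*‖A (x (k+1)) - b‖^2 - η k ≤ d (lam (k+1)) := by
    intro k hk
    have h1 := hlow k hk
    have h2 := hshift (x (k+1)) (lam (k+1)) (lam k)
    have h3 : ⟪lam (k+1) - lam k, A (x (k+1)) - b⟫ = β*‖A (x (k+1)) - b‖^2 := by
      rw [hlam k hk, show lam k + β • (A (x (k+1)) - b) - lam k = β • (A (x (k+1)) - b) from by abel,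
        real_inner_smul_left, real_inner_self_eq_norm_sq]
    have h4 := hdle (x (k+1)) (lam k)
    linarith
  -- step bound on multiplier distance
  have hmul : ∀ k, 1 ≤ k → ‖lam (k+1) - lamstar‖^2 ≤ ‖lam k - lamstar‖^2 + 2*β*η k := by
    intro k hk
    have hst := hdle (x (k+1)) lamstar
    have h2 := hshift (x (k+1)) lamstar (lam (k+1))
    have h1 := hlow k hk
    have hδnn : d (lam (k+1)) ≤ d lamstar := hstar _
    have hswap : ⟪lamstar - lam (k+1), A (x (k+1)) - b⟫
        = -⟪lam (k+1) - lamstar, A (x (k+1)) - b⟫ := by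
      rw [show lamstar - lam (k+1) = -(lam (k+1) - lamstar) from by abel, inner_neg_left]
    have hip : ⟪lam (k+1) - lamstar, A (x (k+1)) - b⟫ ≤ β/2*‖A (x (k+1)) - b‖^2 + η k := by
      linarith
    have hie : ⟪lam (k+1) - lamstar, A (x (k+1)) - b⟫
        = ⟪lam k - lamstar, A (x (k+1)) - b⟫ + β*‖A (x (k+1)) - b‖^2 := by
      rw [hlam k hk, show lam k + β • (A (x (k+1)) - b) - lamstar
        = (lam k - lamstar) + β • (A (x (k+1)) - b) from by abel,
        inner_add_left, real_inner_smul_left, real_inner_self_eq_norm_sq]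
    have hexp : ‖lam (k+1) - lamstar‖^2
        = ‖lam k - lamstar‖^2 + 2*(β*⟪lam k - lamstar, A (x (k+1)) - b⟫)
          + β^2*‖A (x (k+1)) - b‖^2 := by
      rw [hlam k hk, show lam k + β • (A (x (k+1)) - b) - lamstar
        = (lam k - lamstar) + β • (A (x (k+1)) - b) from by abel,
        norm_add_sq_real, real_inner_smul_right, norm_smul]
      simp [abs_of_pos hβ]
      ring
    have hipk : β*⟪lam k - lamstar, A (x (k+1)) - b⟫ ≤ β*(η k - β/2*‖A (x (k+1)) - b‖^2) := by
      apply mul_le_mul_of_nonneg_left _ hβ.le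
      linarith
    nlinarith [hipk, hexp]
  -- distance to lamstar stays bounded by B
  have hlamB : ∀ k, 1 ≤ k → ‖lam k - lamstar‖^2 ≤ B^2 := by
    have haux : ∀ j : ℕ, ‖lam (j+1) - lamstar‖^2
        ≤ ‖lam 1 - lamstar‖^2 + 2*β*∑ i ∈ Finset.range j, η (i+1) := by
      intro j
      induction j with
      | zero => simp
      | succ j ih =>
        have hm := hmul (j+1) (Nat.succ_le_succ (Nat.zero_le j))
        rw [Finset.sum_range_succ]
        linarith
    intro k hk
    obtain ⟨j, rfl⟩ := Nat.exists_eq_add_of_le hk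
    have h1 := haux j
    have hsum_le : ∑ i ∈ Finset.range j, η (i+1) ≤ ∑' i : ℕ, η (i+1) :=
      Summable.sum_le_tsum _ (fun i _ => htnn i) hsum
    rw [hBsq]
    have hc : (1 + j) = (j + 1) := Nat.add_comm 1 j
    rw [hc]
    nlinarith [mul_le_mul_of_nonneg_left hsum_le (by positivity : (0:ℝ) ≤ 2*β)]
  -- key recursion
  have hrec : ∀ k, 1 ≤ k → δ (k+1) ≤ δ k + η k - 2*θ*(max (δ k - η k) 0)^2 := by
    intro k hk
    have hv2 : β/2*‖A (x (k+1)) - b‖^2 ≤ δ k - δ (k+1) + η k := by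
      have h := hasc k hk
      rw [hδ k, hδ (k+1)]
      linarith
    rcases le_or_gt (δ k) (η k) with hcase | hcase
    · have hmax : max (δ k - η k) 0 = 0 := max_eq_right (by linarith)
      rw [hmax]
      have : (0:ℝ) ≤ β/2*‖A (x (k+1)) - b‖^2 := by positivity
      norm_num
      linarith
    · have hmax : max (δ k - η k) 0 = δ k - η k := max_eq_left (by linarith)
      rw [hmax]
      have hs := hsg k hk lamstar
      have hδk : δ k - η k ≤ ⟪lamstar - lam k, A (x (k+1)) - b⟫ := by
        rw [hδ]
        linarith
      have hnrm : ‖lamstar - lam k‖ ≤ B := by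
        rw [norm_sub_rev]
        have h := hlamB k hk
        nlinarith [norm_nonneg (lam k - lamstar), hBpos.le]
      have hcs : ⟪lamstar - lam k, A (x (k+1)) - b⟫ ≤ B*‖A (x (k+1)) - b‖ :=
        le_trans (real_inner_le_norm _ _)
          (mul_le_mul_of_nonneg_right hnrm (norm_nonneg _))
      have h1 : (δ k - η k)^2 ≤ B^2*‖A (x (k+1)) - b‖^2 := by
        nlinarith [hδk, hcs, hcase]
      have h2 : 2*θ*(δ k - η k)^2 ≤ 2*θ*(B^2*‖A (x (k+1)) - b‖^2) :=
        mul_le_mul_of_nonneg_left h1 (by positivity)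
      have h3 : 2*θ*(B^2*‖A (x (k+1)) - b‖^2) = β/2*‖A (x (k+1)) - b‖^2 := by
        rw [hβθ]; ring
      linarith
  -- monotone chain for η
  have hηchain : ∀ a c : ℕ, 1 ≤ a → a ≤ c → η c ≤ η a := by
    intro a c ha hac
    induction c, hac using Nat.le_induction with
    | base => exact le_rfl
    | succ m hm ih => exact le_trans (hηmono m (le_trans ha hm)) ih
  -- final induction
  intro k hk
  induction k, hk using Nat.le_induction with
  | base =>
    have h1 := hδk₀ k₀ le_rfl
    have hη0 : 0 < η k₀ := hηpos k₀ (by omega)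
    have hsη : 0 < Real.sqrt (η k₀) := Real.sqrt_pos.2 hη0
    have hk0pos : (0:ℝ) < (k₀:ℝ) := by
      have : (4:ℝ) ≤ (k₀:ℝ) := by exact_mod_cast hk₀
      linarith
    have heq : τ₁/(k₀:ℝ) + τ₂*Real.sqrt (η k₀) = 1/(2*θ) := by
      rw [hτ₁, hτ₂]
      field_simp
      ring
    linarith
  | succ k hkk ih =>
    have hk1 : 1 ≤ k := by omega
    have hη_k : 0 < η k := hηpos k hk1
    have hη_k1 : 0 < η (k+1) := hηpos (k+1) (by omega)
    have hη_k0 : 0 < η k₀ := hηpos k₀ (by omega)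
    have hs : 0 < Real.sqrt (η k) := Real.sqrt_pos.2 hη_k
    have hs' : 0 < Real.sqrt (η (k+1)) := Real.sqrt_pos.2 hη_k1
    have hs0 : Real.sqrt (η k) ≤ Real.sqrt (η k₀) :=
      Real.sqrt_le_sqrt (hηchain k₀ k (by omega) hkk)
    have hsq : Real.sqrt (η k)^2 = η k := Real.sq_sqrt hη_k.le
    have hs0sq : Real.sqrt (η k₀)^2 = η k₀ := Real.sq_sqrt hη_k0.le
    have hs0e : Real.sqrt (η k₀)^2 ≤ 1/(24*θ) := by rw [hs0sq]; exact hηk₀ k₀ le_rfl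
    have hse : Real.sqrt (η k)^2 ≤ 1/(24*θ) := by rw [hsq]; exact hηk₀ k hkk
    have hKr : (4:ℝ) ≤ (k₀:ℝ) := by exact_mod_cast hk₀
    have hKk : ((k₀:ℝ)) ≤ (k:ℝ) := by exact_mod_cast hkk
    have hKpos : (0:ℝ) < (k:ℝ) := by linarith
    have hrat : Real.sqrt (η k)*((k:ℝ)-2)/(k:ℝ) ≤ Real.sqrt (η (k+1)) := by
      have h := hratio k hkk
      rw [Real.sqrt_div hη_k1.le] at h
      have h2 := mul_le_mul_of_nonneg_left h hs.le
      have he2 : Real.sqrt (η k)*(Real.sqrt (η (k+1))/Real.sqrt (η k)) = Real.sqrt (η (k+1)) := by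
        field_simp
      calc Real.sqrt (η k)*((k:ℝ)-2)/(k:ℝ) = Real.sqrt (η k)*(((k:ℝ)-2)/(k:ℝ)) := by ring
      _ ≤ Real.sqrt (η k)*(Real.sqrt (η (k+1))/Real.sqrt (η k)) := h2
      _ = Real.sqrt (η (k+1)) := he2
    have hgoalcast : ((k+1:ℕ):ℝ) = (k:ℝ)+1 := by push_cast; ring
    rw [hgoalcast, hτ₁, hτ₂]
    rw [hτ₁, hτ₂] at ih
    have hrk := hrec k hk1
    rcases le_or_gt ((k₀:ℝ)/(4*θ)/(k:ℝ) + 1/(4*θ*Real.sqrt (η k₀))*Real.sqrt (η k))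
        (1/(4*θ) + η k) with hcA | hcB
    · rcases le_or_gt (δ k) (η k) with hd1 | hd2
      · have hmax0 : (0:ℝ) ≤ 2*θ*(max (δ k - η k) 0)^2 := by positivity
        have hb1 : δ (k+1) ≤ 2*η k := by linarith
        have hhalf : Real.sqrt (η k)/2 ≤ Real.sqrt (η (k+1)) := by
          have h1 : Real.sqrt (η k)/2 ≤ Real.sqrt (η k)*((k:ℝ)-2)/(k:ℝ) := by
            rw [div_le_div_iff₀ (by norm_num) hKpos]
            nlinarith [hs.le]
          linarith
        have hc24 : θ*(1/(24*θ)) = 1/24 := by field_simp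
        have h16 : 16*θ*(Real.sqrt (η k)*Real.sqrt (η k₀)) ≤ 1 := by
          have ha : Real.sqrt (η k)*Real.sqrt (η k₀) ≤ Real.sqrt (η k₀)^2 := by
            nlinarith [Real.sqrt_nonneg (η k₀)]
          have hb2 : θ*(Real.sqrt (η k)*Real.sqrt (η k₀)) ≤ 1/24 := by
            calc θ*(Real.sqrt (η k)*Real.sqrt (η k₀)) ≤ θ*(Real.sqrt (η k₀)^2) :=
              mul_le_mul_of_nonneg_left ha hθpos.le
            _ ≤ θ*(1/(24*θ)) := mul_le_mul_of_nonneg_left hs0e hθpos.le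
            _ = 1/24 := hc24
          linarith
        have hkey : 2*η k ≤ 1/(4*θ*Real.sqrt (η k₀))*Real.sqrt (η (k+1)) := by
          have h2 : 2*η k = 2*Real.sqrt (η k)^2 := by rw [hsq]
          rw [h2]
          exact tinyA θ (Real.sqrt (η k)) (Real.sqrt (η k₀)) (Real.sqrt (η (k+1)))
            hθpos hs.le (Real.sqrt_pos.2 hη_k0) h16 hhalf
        have hτ₁nn : 0 ≤ (k₀:ℝ)/(4*θ)/((k:ℝ)+1) := by positivity
        linarith
      · have hmax : max (δ k - η k) 0 = δ k - η k := max_eq_left (by linarith)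
        rw [hmax] at hrk
        have hcd : δ k ≤ (k₀:ℝ)/(4*θ)/(k:ℝ) + 1/(4*θ*Real.sqrt (η k₀))*Real.sqrt (η k) := ih
        have h2θ : 2*θ*(((k₀:ℝ)/(4*θ)/(k:ℝ) + 1/(4*θ*Real.sqrt (η k₀))*Real.sqrt (η k))
            + δ k - 2*η k) ≤ 1 := by
          have hb2 : ((k₀:ℝ)/(4*θ)/(k:ℝ) + 1/(4*θ*Real.sqrt (η k₀))*Real.sqrt (η k))
              + δ k - 2*η k ≤ 2*(1/(4*θ)) := by linarith
          calc 2*θ*(((k₀:ℝ)/(4*θ)/(k:ℝ) + 1/(4*θ*Real.sqrt (η k₀))*Real.sqrt (η k))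
              + δ k - 2*η k) ≤ 2*θ*(2*(1/(4*θ))) := mul_le_mul_of_nonneg_left hb2 (by positivity)
          _ = 1 := by field_simp; ring
        have hprod : 0 ≤ (((k₀:ℝ)/(4*θ)/(k:ℝ) + 1/(4*θ*Real.sqrt (η k₀))*Real.sqrt (η k)) - δ k)
            *(1 - 2*θ*(((k₀:ℝ)/(4*θ)/(k:ℝ) + 1/(4*θ*Real.sqrt (η k₀))*Real.sqrt (η k))
            + δ k - 2*η k)) :=
          mul_nonneg (by linarith) (by linarith)
        have hmono : δ (k+1) ≤ ((k₀:ℝ)/(4*θ)/(k:ℝ) + 1/(4*θ*Real.sqrt (η k₀))*Real.sqrt (η k))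
            + η k - 2*θ*(((k₀:ℝ)/(4*θ)/(k:ℝ) + 1/(4*θ*Real.sqrt (η k₀))*Real.sqrt (η k)) - η k)^2 := by
          nlinarith [hprod, hrk]
        have hstep := stepA θ (Real.sqrt (η k)) (Real.sqrt (η (k+1))) (Real.sqrt (η k₀))
          (k:ℝ) (k₀:ℝ) hθpos hs hs0 hrat hs0e hKr hKk
        rw [hsq] at hstep
        linarith
    · have hb1 : δ (k+1) ≤ 2*η k + 1/(8*θ) := by
        rcases le_or_gt (δ k) (η k) with hd1 | hd2
        · have hmax0 : (0:ℝ) ≤ 2*θ*(max (δ k - η k) 0)^2 := by positivity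
          have h8 : 0 < 1/(8*θ) := by positivity
          linarith
        · have hmax : max (δ k - η k) 0 = δ k - η k := max_eq_left (by linarith)
          rw [hmax] at hrk
          have hq : 2*(θ*(δ k - η k - 1/(4*θ))^2) = 2*θ*(δ k - η k)^2 - (δ k - η k) + 1/(8*θ) := by
            field_simp
            ring
          have hq2 := mul_nonneg hθpos.le (sq_nonneg (δ k - η k - 1/(4*θ)))
          linarith
      have hcB' : 1/(4*θ) + Real.sqrt (η k)^2
          ≤ (k₀:ℝ)/(4*θ)/(k:ℝ) + 1/(4*θ*Real.sqrt (η k₀))*Real.sqrt (η k) := by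
        rw [hsq]; linarith
      have hstep := stepB θ (Real.sqrt (η k)) (Real.sqrt (η (k+1))) (Real.sqrt (η k₀))
        (k:ℝ) (k₀:ℝ) hθpos hs hs0 hrat hs0e hse hKr hKk hcB'
      rw [hsq] at hstep
      linarith
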